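/- In the coupled scalar adaptive system T·ṡ + (1+k)·s = f̃/m, f̃̇ = −(γ/m)·s, the state (s, f̃) satisfies s(t) → 0 as t → ∞. -/

import Mathlib

set_option maxHeartbeats 1000000


open Filter

/-- In the coupled scalar adaptive system T·ṡ + (1+k)·s = f̃/m, f̃̇ = −(γ/m)·s,
the sliding variable s(t) → 0 as t → ∞. -/
theorem stmt3 (T k γ m : ℝ) (hT : 0 < T) (hk : 0 < k) (hγ : 0 < γ) (hm : 0 < m)
    (s f s' : ℝ → ℝ)
    (hs : ∀ t, 0 ≤ t → HasDerivAt s (s' t) t)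
    (hsys : ∀ t, 0 ≤ t → T * s' t + (1 + k) * s t = f t / m)
    (hf : ∀ t, 0 ≤ t → HasDerivAt f (-(γ / m) * s t) t)
    (hs'c : ContinuousOn s' (Set.Ici 0)) :
    Tendsto s atTop (nhds 0) := by
  set a : ℝ := 1 / (m * T) with ha_def
  set b : ℝ := (1 + k) / T with hb_def
  set c : ℝ := γ / m with hc_def
  have ha : 0 < a := by rw [ha_def]; positivity
  have hb : 0 < b := by rw [hb_def]; positivity
  have hc : 0 < c := by rw [hc_def]; positivity
  set p : ℝ := (c + 1) / (2 * b) with hp_def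
  have hp : 0 < p := by rw [hp_def]; positivity
  have hpb : 2 * b * p = c + 1 := by rw [hp_def]; field_simp
  set q : ℝ := (2 * p * a + b) / (2 * c) with hq_def
  have hq : 0 < q := by rw [hq_def]; positivity
  have hqc : 2 * c * q = 2 * p * a + b := by rw [hq_def]; field_simp
  have hs'eq : ∀ t, 0 ≤ t → s' t = a * f t - b * s t := by
    intro t ht
    have h := hsys t ht
    rw [ha_def, hb_def]
    field_simp at h ⊢
    linear_combination h
  set V : ℝ → ℝ := fun t => p * s t ^ 2 + q * f t ^ 2 - s t * f t with hV_def
  have hV : ∀ t, 0 ≤ t → HasDerivAt V (-(s t ^ 2 + a * f t ^ 2)) t := by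
    intro t ht
    have hst := hs t ht
    have hft : HasDerivAt f (-c * s t) t := by
      have := hf t ht
      simpa [hc_def] using this
    have h1 : HasDerivAt V
        (p * ((2 : ℕ) * s t ^ 1 * s' t) + q * ((2 : ℕ) * f t ^ 1 * (-c * s t))
          - (s' t * f t + s t * (-c * s t))) t :=
      (((hst.pow 2).const_mul p).add ((hft.pow 2).const_mul q)).sub (hst.mul hft)
    have hkey : p * ((2 : ℕ) * s t ^ 1 * s' t) + q * ((2 : ℕ) * f t ^ 1 * (-c * s t))
          - (s' t * f t + s t * (-c * s t)) = -(s t ^ 2 + a * f t ^ 2) := by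
      rw [hs'eq t ht]
      push_cast
      linear_combination (-(s t ^ 2)) * hpb + (-(s t * f t)) * hqc
    rwa [hkey] at h1
  set P : ℝ := p + q + 1 / 2 with hP_def
  have hP : 0 < P := by rw [hP_def]; positivity
  set α : ℝ := min 1 a / P with hα_def
  have hα : 0 < α := by rw [hα_def]; positivity
  have hαP : α * P = min 1 a := by rw [hα_def]; field_simp
  have hVle : ∀ t, -(s t ^ 2 + a * f t ^ 2) ≤ -α * V t := by
    intro t
    have h1 : V t ≤ P * (s t ^ 2 + f t ^ 2) := by
      rw [hV_def, hP_def]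
      nlinarith [sq_nonneg (s t + f t), hp.le, hq.le, sq_nonneg (s t), sq_nonneg (f t)]
    have h2 : α * V t ≤ α * (P * (s t ^ 2 + f t ^ 2)) :=
      mul_le_mul_of_nonneg_left h1 hα.le
    have h3 : α * (P * (s t ^ 2 + f t ^ 2)) = min 1 a * (s t ^ 2 + f t ^ 2) := by
      rw [← mul_assoc, hαP]
    have h4 : min 1 a * (s t ^ 2 + f t ^ 2) ≤ s t ^ 2 + a * f t ^ 2 := by
      have hm1 : min 1 a ≤ 1 := min_le_left 1 a
      have hm2 : min 1 a ≤ a := min_le_right 1 a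
      nlinarith [sq_nonneg (s t), sq_nonneg (f t)]
    linarith
  set W : ℝ → ℝ := fun t => V t * Real.exp (α * t) with hW_def
  have hWderiv : ∀ t, 0 ≤ t → HasDerivAt W
      (-(s t ^ 2 + a * f t ^ 2) * Real.exp (α * t) + V t * (Real.exp (α * t) * (α * 1))) t := by
    intro t ht
    exact (hV t ht).mul (((hasDerivAt_id t).const_mul α).exp)
  have hanti : AntitoneOn W (Set.Ici 0) := by
    apply antitoneOn_of_deriv_nonpos (convex_Ici 0)
    · intro t ht
      exact (hWderiv t ht).continuousAt.continuousWithinAt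
    · intro t ht
      rw [interior_Ici] at ht
      exact (hWderiv t (le_of_lt ht)).differentiableAt.differentiableWithinAt
    · intro t ht
      rw [interior_Ici] at ht
      rw [(hWderiv t (le_of_lt ht)).deriv]
      have h1 := hVle t
      have h2 := (Real.exp_pos (α * t)).le
      nlinarith [mul_le_mul_of_nonneg_right h1 h2]
  have hVdecay : ∀ t, 0 ≤ t → V t ≤ V 0 * Real.exp (-(α * t)) := by
    intro t ht
    have h := hanti (Set.mem_Ici.2 le_rfl) (Set.mem_Ici.2 ht) ht
    rw [hW_def] at h
    simp only [mul_zero, Real.exp_zero, mul_one] at h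
    have hepos : 0 < Real.exp (α * t) := Real.exp_pos _
    rw [Real.exp_neg, ← div_eq_mul_inv, le_div_iff₀ hepos]
    exact h
  set δ : ℝ := p - 1 / (4 * q) with hδ_def
  have h4qδ : 4 * q * δ = 4 * q * p - 1 := by rw [hδ_def]; field_simp
  have hδ : 0 < δ := by
    have key : c * (4 * p * q) = 4 * a * p ^ 2 + c + 1 := by
      linear_combination 2 * p * hqc + hpb
    have h1 : 1 < 4 * p * q := by
      nlinarith [mul_pos ha (mul_pos hp hp), hc]
    rw [hδ_def, sub_pos, div_lt_iff₀ (by positivity)]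
    nlinarith
  have hVlb : ∀ t, δ * s t ^ 2 ≤ V t := by
    intro t
    have hid : 4 * q * (V t - δ * s t ^ 2) = (s t - 2 * q * f t) ^ 2 := by
      rw [hV_def]
      linear_combination (-(s t ^ 2)) * h4qδ
    nlinarith [sq_nonneg (s t - 2 * q * f t), hq]
  have hsq : Tendsto (fun t => s t ^ 2) atTop (nhds 0) := by
    have hbound : ∀ᶠ t in atTop, s t ^ 2 ≤ (V 0 / δ) * Real.exp (-(α * t)) := by
      filter_upwards [eventually_ge_atTop (0 : ℝ)] with t ht
      have h1 := hVlb t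
      have h2 := hVdecay t ht
      rw [div_mul_eq_mul_div, le_div_iff₀ hδ]
      nlinarith
    have hexp : Tendsto (fun t => (V 0 / δ) * Real.exp (-(α * t))) atTop (nhds 0) := by
      have h1 : Tendsto (fun t : ℝ => -(α * t)) atTop atBot := by
        apply tendsto_neg_atTop_atBot.comp
        exact Tendsto.const_mul_atTop hα tendsto_id
      have h2 : Tendsto (fun t => Real.exp (-(α * t))) atTop (nhds 0) :=
        Real.tendsto_exp_atBot.comp h1
      simpa using h2.const_mul (V 0 / δ)
    exact squeeze_zero' (Eventually.of_forall fun t => sq_nonneg _) hbound hexp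
  rw [tendsto_zero_iff_abs_tendsto_zero]
  have habs : Tendsto (fun t => Real.sqrt (s t ^ 2)) atTop (nhds 0) := by
    have := (Real.continuous_sqrt.tendsto' 0 0 Real.sqrt_zero).comp hsq
    exact this
  simpa [Real.sqrt_sq_eq_abs, Function.comp_def] using habs
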